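/- Given the socially optimal investment profile x* minimizing Σ_i g_i(x) over x ⪰ 0, where each g_i is differentiable and convex, the personalized Lindhal prices l*_i := -∇g_i(x*) + λ_i (where λ_i ⪰ 0 are the KKT multipliers satisfying Σ_i(∇g_i(x*) - λ_i) = 0 and λ_i^T x* = 0) satisfy: x* minimizes g_i(x) + (l*_i)^T x over x ⪰ 0, for every user i. -/

import Mathlib

/-- Gradient inequality for a differentiable convex function on `ℝ^N`. -/
lemma grad_ineq {N : ℕ} {f : (Fin N → ℝ) → ℝ} (hdiff : Differentiable ℝ f)
    (hconv : ConvexOn ℝ Set.univ f) (a b : Fin N → ℝ) :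
    f a + fderiv ℝ f a (b - a) ≤ f b := by
  set D := fderiv ℝ f a with hD
  set φ : ℝ → ℝ := fun t => f (a + t • (b - a)) with hφ
  have hline : ∀ t : ℝ, HasDerivAt φ (D (b - a)) t → True := fun _ _ => trivial
  have hder : HasDerivAt φ (D (b - a)) 0 := by
    have h1 : HasDerivAt (fun t : ℝ => a + t • (b - a)) (b - a) 0 := by
      simpa using ((hasDerivAt_id (0:ℝ)).smul_const (b - a)).const_add a
    have h2 : HasFDerivAt f D (a + (0:ℝ) • (b - a)) := by
      simpa using (hdiff (a + (0:ℝ) • (b - a))).hasFDerivAt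
    exact h2.comp_hasDerivAt 0 h1
  have hφconv : ConvexOn ℝ Set.univ φ := by
    have := hconv.comp_affineMap
      (AffineMap.mk (fun t : ℝ => a + t • (b - a))
        { toFun := fun t : ℝ => t • (b - a)
          map_add' := fun x y => by simp [add_smul]
          map_smul' := fun c x => by simp [smul_smul] } (fun p v => by
            simp [add_smul]; ring_nf))
    simp [Function.comp] at this; exact this
  have hslope := hφconv.le_slope_of_hasDerivAt (Set.mem_univ (0:ℝ))
    (Set.mem_univ (1:ℝ)) one_pos hder
  have : D (b - a) ≤ φ 1 - φ 0 := by
    have := hslope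
    rw [slope_def_field] at this
    simpa using this
  have hφ0 : φ 0 = f a := by simp [hφ]
  have hφ1 : φ 1 = f b := by simp [hφ]
  rw [hφ0, hφ1] at this
  linarith

/-- Given the socially optimal profile `x*` with KKT multipliers `λ_i`, the
Lindhal prices `l*_i = -∇g_i(x*) + λ_i` make `x*` individually optimal:
`x*` minimizes `g_i(x) + (l*_i)ᵀx` over the nonnegative orthant, for every `i`. -/
theorem stmt10 (N : ℕ)
    (g : Fin N → (Fin N → ℝ) → ℝ)
    (hdiff : ∀ i, Differentiable ℝ (g i))
    (hconv : ∀ i, ConvexOn ℝ Set.univ (g i))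
    (xstar : Fin N → ℝ) (hxstar : ∀ k, 0 ≤ xstar k)
    (hopt : ∀ x : Fin N → ℝ, (∀ k, 0 ≤ x k) → ∑ i, g i xstar ≤ ∑ i, g i x)
    (lam : Fin N → Fin N → ℝ) (hlam : ∀ i k, 0 ≤ lam i k)
    (hstat : ∀ k : Fin N,
      ∑ i, (fderiv ℝ (g i) xstar (Pi.single k 1) - lam i k) = 0)
    (hcs : ∀ i : Fin N, ∑ k, lam i k * xstar k = 0)
    (l : Fin N → Fin N → ℝ)
    (hldef : ∀ i k, l i k = -(fderiv ℝ (g i) xstar (Pi.single k 1)) + lam i k) :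
    ∀ i : Fin N, ∀ x : Fin N → ℝ, (∀ k, 0 ≤ x k) →
      g i xstar + ∑ k, l i k * xstar k ≤ g i x + ∑ k, l i k * x k := by
  intro i x hx
  set D := fderiv ℝ (g i) xstar with hD
  have hgrad : g i xstar + D (x - xstar) ≤ g i x :=
    grad_ineq (hdiff i) (hconv i) xstar x
  -- expand D on coordinates
  have hDexp : ∀ v : Fin N → ℝ, D v = ∑ k, v k * D (Pi.single k 1) := by
    intro v
    have hsingle : ∀ k : Fin N, (fun j => if k = j then (1:ℝ) else 0) = Pi.single k 1 := by
      intro k; funext j; simp [Pi.single_apply, eq_comm]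
    conv_lhs => rw [pi_eq_sum_univ v]
    rw [map_sum]
    refine Finset.sum_congr rfl fun k _ => ?_
    rw [map_smul, hsingle k]
    simp [smul_eq_mul]
  have hDxs : D (x - xstar) = ∑ k, (x k - xstar k) * D (Pi.single k 1) := by
    rw [hDexp]; simp
  have hlamx : 0 ≤ ∑ k, lam i k * x k :=
    Finset.sum_nonneg fun k _ => mul_nonneg (hlam i k) (hx k)
  have hsum : ∑ k, l i k * x k - ∑ k, l i k * xstar k
      = -(D (x - xstar)) + ∑ k, lam i k * x k - ∑ k, lam i k * xstar k := by
    rw [hDxs, ← Finset.sum_sub_distrib, ← Finset.sum_neg_distrib, ← Finset.sum_add_distrib,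
      ← Finset.sum_sub_distrib]
    congr 1; ext k
    rw [hldef i k]; ring
  rw [hcs i] at hsum
  linarith
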